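/- Let A be the linear span in M₃(ℂ) of the matrix units E₁₂, E₁₃, E₂₂, E₃₃. Then the smallest linear subspace S of M₃(ℂ) containing A and satisfying x y* z ∈ S for all x, y, z ∈ S equals the set of all 3×3 complex matrices whose first column is zero; in particular S is 6-dimensional (a copy of M_{3,2}). -/

import Mathlib

open Matrix

/-- The matrix unit `E i j` in `M₃(ℂ)`. -/
noncomputable def E3 (i j : Fin 3) : Matrix (Fin 3) (Fin 3) ℂ := Matrix.single i j 1

/-- The algebra `A` of Example 3.4: the span of `E₁₂, E₁₃, E₂₂, E₃₃` in `M₃(ℂ)`. -/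
noncomputable def Aex : Submodule ℂ (Matrix (Fin 3) (Fin 3) ℂ) :=
  Submodule.span ℂ {E3 0 1, E3 0 2, E3 1 1, E3 2 2}

/-- The linear map sending a matrix to its first column. -/
noncomputable def colMap : Matrix (Fin 3) (Fin 3) ℂ →ₗ[ℂ] (Fin 3 → ℂ) where
  toFun x := fun i => x i 0
  map_add' x y := rfl
  map_smul' c x := rfl

lemma mem_ker_colMap (x : Matrix (Fin 3) (Fin 3) ℂ) :
    x ∈ LinearMap.ker colMap ↔ ∀ i, x i 0 = 0 := by
  constructor
  · intro h i
    have := congrFun h i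
    exact this
  · intro h
    funext i
    exact h i

lemma ctE (i j : Fin 3) : (Matrix.single i j (1:ℂ))ᴴ = Matrix.single j i 1 := by
  ext a b
  simp only [Matrix.conjTranspose_apply, Matrix.single, Matrix.of_apply, apply_ite,
    star_one, star_zero]
  by_cases h1 : i = b <;> by_cases h2 : j = a <;> simp [h1, h2]

lemma colMap_surj : Function.Surjective colMap := by
  intro v
  exact ⟨Matrix.of (fun i j => if j = 0 then v i else 0), by funext i; show (if (0:Fin 3) = 0 then v i else 0) = v i; simp⟩

/-- Example 3.4: the triple system generated by `A` in `M₃(ℂ)` (the smallest subspace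
containing `A` and closed under `x y* z`) is the 6-dimensional space of matrices with zero
first column (a copy of `M_{3,2}`). -/
theorem stmt16 (S : Submodule ℂ (Matrix (Fin 3) (Fin 3) ℂ))
    (hAS : (Aex : Set (Matrix (Fin 3) (Fin 3) ℂ)) ⊆ S)
    (hS : ∀ x ∈ S, ∀ y ∈ S, ∀ z ∈ S, x * star y * z ∈ S)
    (hmin : ∀ S' : Submodule ℂ (Matrix (Fin 3) (Fin 3) ℂ),
      (Aex : Set (Matrix (Fin 3) (Fin 3) ℂ)) ⊆ S' →
      (∀ x ∈ S', ∀ y ∈ S', ∀ z ∈ S', x * star y * z ∈ S') → S ≤ S') :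
    (S : Set (Matrix (Fin 3) (Fin 3) ℂ)) = {x : Matrix (Fin 3) (Fin 3) ℂ | ∀ i, x i 0 = 0} ∧
      Module.finrank ℂ ↥S = 6 := by
  set T : Submodule ℂ (Matrix (Fin 3) (Fin 3) ℂ) := LinearMap.ker colMap with hT
  -- generators of A are in S
  have h01 : E3 0 1 ∈ S := hAS (Submodule.subset_span (by simp))
  have h02 : E3 0 2 ∈ S := hAS (Submodule.subset_span (by simp))
  have h11 : E3 1 1 ∈ S := hAS (Submodule.subset_span (by simp))
  have h22 : E3 2 2 ∈ S := hAS (Submodule.subset_span (by simp))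
  have h12 : E3 1 2 ∈ S := by
    have := hS _ h11 _ h01 _ h02
    have he : E3 1 1 * star (E3 0 1) * E3 0 2 = E3 1 2 := by
      simp [E3, star_eq_conjTranspose, ctE, Matrix.single_mul_single_same]
    rwa [he] at this
  have h21 : E3 2 1 ∈ S := by
    have := hS _ h22 _ h02 _ h01
    have he : E3 2 2 * star (E3 0 2) * E3 0 1 = E3 2 1 := by
      simp [E3, star_eq_conjTranspose, ctE, Matrix.single_mul_single_same]
    rwa [he] at this
  have hE : ∀ i j : Fin 3, j ≠ 0 → E3 i j ∈ S := by
    intro i j hj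
    fin_cases i <;> fin_cases j <;>
      first
      | exact absurd rfl hj
      | exact h01 | exact h02 | exact h11 | exact h12 | exact h21 | exact h22
  -- T ≤ S
  have hTS : T ≤ S := by
    intro x hx
    rw [mem_ker_colMap] at hx
    have hrep : x = ∑ i : Fin 3, ∑ j : Fin 3, x i j • E3 i j := by
      conv_lhs => rw [Matrix.matrix_eq_sum_single x]
      refine Finset.sum_congr rfl fun i _ => Finset.sum_congr rfl fun j _ => ?_
      rw [E3, Matrix.smul_single, smul_eq_mul, mul_one]
    rw [hrep]
    refine Submodule.sum_mem _ fun i _ => Submodule.sum_mem _ fun j _ => ?_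
    by_cases hj : j = 0
    · subst hj; rw [hx i, zero_smul]; exact Submodule.zero_mem _
    · exact Submodule.smul_mem _ _ (hE i j hj)
  -- S ≤ T
  have hST : S ≤ T := by
    refine hmin T ?_ ?_
    · have hsub : Aex ≤ T := by
        rw [Aex, Submodule.span_le]
        intro m hm
        simp only [Set.mem_insert_iff, Set.mem_singleton_iff] at hm
        rcases hm with h|h|h|h <;> subst h <;>
          · rw [SetLike.mem_coe, mem_ker_colMap]
            intro i
            fin_cases i <;> simp [E3, Matrix.single]
      exact fun m hm => hsub hm
    · intro x hx y hy z hz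
      rw [mem_ker_colMap] at hz ⊢
      intro i
      rw [Matrix.mul_apply]
      exact Finset.sum_eq_zero fun j _ => by rw [hz j, mul_zero]
  have hST' : S = T := le_antisymm hST hTS
  constructor
  · rw [hST']
    ext x
    simp [hT, mem_ker_colMap x]
  · rw [hST']
    have h1 := LinearMap.finrank_range_add_finrank_ker colMap
    rw [LinearMap.range_eq_top.mpr colMap_surj] at h1
    have h2 : Module.finrank ℂ (Matrix (Fin 3) (Fin 3) ℂ) = 9 := by
      simp [Module.finrank_matrix]
    have h3 : Module.finrank ℂ (⊤ : Submodule ℂ (Fin 3 → ℂ)) = 3 := by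
      simp
    have h4 : Module.finrank ℂ ↥T = Module.finrank ℂ ↥(LinearMap.ker colMap) := rfl
    omega
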